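/- Let a < b be real numbers, λ > 0, f : (a,b) → ℝ continuously differentiable with |f'(x)| ≥ λ for all x ∈ (a,b) and f' monotone, and let g : [a,b] → ℂ be continuously differentiable with |g(x)| ≤ G for all x ∈ [a,b]. Then |∫_a^b g(x) e(f(x)) dx| ≪ G/λ + (1/λ) ∫_a^b |g'(x)| dx, with an absolute implied constant. -/

import Mathlib

open scoped BigOperators

/-- `e(t) = exp(2πit)`. -/
noncomputable def ec (t : ℝ) : ℂ := Complex.exp (2 * Real.pi * Complex.I * t)

open MeasureTheory intervalIntegral Set Function

lemma lemA_anti {α β M K : ℝ} {ψ : ℝ → ℝ} {h : ℝ → ℂ}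
    (hab : α ≤ β) (hK : 0 ≤ K)
    (hanti : Antitone ψ) (hψ0 : ∀ u, 0 ≤ ψ u) (hψM : ∀ u, ψ u ≤ M)
    (hh : Continuous h)
    (hprim : ∀ c ∈ Set.Icc α β, ∀ d ∈ Set.Icc α β, ‖∫ t in c..d, h t‖ ≤ K) :
    ‖∫ u in α..β, (ψ u : ℂ) * h u‖ ≤ M * K := by
  have hM : 0 ≤ M := le_trans (hψ0 α) (hψM α)
  set μA := volume.restrict (Ioc α β) with hμA
  set μB := volume.restrict (Ioc (0:ℝ) M) with hμB
  haveI : IsFiniteMeasure μA := ⟨by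
    rw [hμA, Measure.restrict_apply_univ, Real.volume_Ioc]; exact ENNReal.ofReal_lt_top⟩
  haveI : IsFiniteMeasure μB := ⟨by
    rw [hμB, Measure.restrict_apply_univ, Real.volume_Ioc]; exact ENNReal.ofReal_lt_top⟩
  have hψm : Measurable ψ := hanti.measurable
  obtain ⟨C₀, hC₀⟩ := (isCompact_Icc : IsCompact (Icc α β)).exists_bound_of_continuousOn
    hh.continuousOn
  have hC₀0 : 0 ≤ C₀ := le_trans (norm_nonneg _) (hC₀ α ⟨le_refl _, hab⟩)
  set F : ℝ → ℝ → ℂ := fun u s => if 0 < s ∧ s < ψ u then h u else 0 with hF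
  have step2 : ∀ u, (ψ u : ℂ) * h u = ∫ s, F u s ∂μB := by
    intro u
    have h1 : F u = (Ioo (0:ℝ) (ψ u)).indicator (fun _ => h u) := by
      funext s; simp [hF, Set.indicator_apply, Set.mem_Ioo]
    rw [h1, hμB, MeasureTheory.integral_indicator measurableSet_Ioo,
      Measure.restrict_restrict measurableSet_Ioo]
    have hsub : Ioo (0:ℝ) (ψ u) ∩ Ioc 0 M = Ioo 0 (ψ u) :=
      inter_eq_left.mpr (fun s hs => ⟨hs.1, le_of_lt (lt_of_lt_of_le hs.2 (hψM u))⟩)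
    rw [hsub, MeasureTheory.integral_const, measureReal_def, Measure.restrict_apply_univ, Real.volume_Ioo,
      ENNReal.toReal_ofReal (by simpa using hψ0 u)]
    simp [Complex.real_smul]
  have hSmeas : MeasurableSet {p : ℝ × ℝ | 0 < p.2 ∧ p.2 < ψ p.1} :=
    (measurableSet_lt measurable_const measurable_snd).inter
      (measurableSet_lt measurable_snd (hψm.comp measurable_fst))
  have huncF : uncurry F = ({p : ℝ × ℝ | 0 < p.2 ∧ p.2 < ψ p.1}).indicator
      (fun p => h p.1) := by
    funext p; cases p with
    | mk u s => simp [uncurry, hF, Set.indicator_apply]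
  have hInt : Integrable (uncurry F) (μA.prod μB) := by
    apply Integrable.mono' (integrable_const C₀)
    · rw [huncF]
      exact ((hh.comp continuous_fst).stronglyMeasurable.indicator hSmeas).aestronglyMeasurable
    · rw [hμA, hμB, Measure.prod_restrict]
      filter_upwards [self_mem_ae_restrict (measurableSet_Ioc.prod measurableSet_Ioc)] with p hp
      rcases p with ⟨u, s⟩
      simp only [uncurry, hF]
      split
      · exact hC₀ u (Ioc_subset_Icc_self hp.1)
      · simpa using hC₀0
  have key : ∀ s ∈ Ioc (0:ℝ) M, ‖∫ u, F u s ∂μA‖ ≤ K := by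
    intro s hs
    have hlt : MeasurableSet {u : ℝ | s < ψ u} := measurableSet_lt measurable_const hψm
    have hFs : (fun u => F u s) = ({u : ℝ | s < ψ u}).indicator h := by
      funext u; simp [hF, Set.indicator_apply, hs.1]
    rw [hFs, hμA, MeasureTheory.integral_indicator hlt, Measure.restrict_restrict hlt]
    set T := {u : ℝ | s < ψ u} ∩ Ioc α β with hT
    set c := sSup (insert α T) with hc
    have hne : (insert α T).Nonempty := ⟨α, mem_insert _ _⟩
    have hub : ∀ u ∈ insert α T, u ≤ β := by
      rintro u (rfl | hu); · exact hab
      · exact hu.2.2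
    have hbdd : BddAbove (insert α T) := ⟨β, hub⟩
    have hαc : α ≤ c := le_csSup hbdd (mem_insert _ _)
    have hcβ : c ≤ β := csSup_le hne hub
    have hT1 : T ⊆ Ioc α c := fun u hu => ⟨hu.2.1, le_csSup hbdd (mem_insert_of_mem _ hu)⟩
    have hT2 : Ioo α c ⊆ T := by
      intro u hu
      obtain ⟨v, hv, huv⟩ := exists_lt_of_lt_csSup hne hu.2
      rcases hv with rfl | hv
      · exact absurd huv (not_lt.mpr hu.1.le)
      · exact ⟨lt_of_lt_of_le hv.1 (hanti huv.le), hu.1, huv.le.trans hv.2.2⟩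
    have haeq : T =ᵐ[volume] Ioc α c := by
      rw [MeasureTheory.ae_eq_set]
      constructor
      · rw [Set.diff_eq_empty.mpr hT1]; exact measure_empty
      · refine measure_mono_null ?_ (measure_singleton c)
        rintro u ⟨hu1, hu2⟩
        by_contra hne'
        exact hu2 (hT2 ⟨hu1.1, lt_of_le_of_ne hu1.2 (fun hh' => hne' (mem_singleton_iff.mpr hh'))⟩)
    rw [setIntegral_congr_set haeq, ← intervalIntegral.integral_of_le hαc]
    exact hprim α ⟨le_refl _, hab⟩ c ⟨hαc, hcβ⟩
  calc ‖∫ u in α..β, (ψ u : ℂ) * h u‖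
      = ‖∫ s, ∫ u, F u s ∂μA ∂μB‖ := by
        rw [intervalIntegral.integral_of_le hab, ← hμA]
        rw [show (∫ u, (ψ u : ℂ) * h u ∂μA) = ∫ u, ∫ s, F u s ∂μB ∂μA from
          integral_congr_ae (Filter.Eventually.of_forall step2)]
        rw [integral_integral_swap hInt]
    _ ≤ K * (μB Set.univ).toReal := by
        apply MeasureTheory.norm_integral_le_of_norm_le_const
        filter_upwards [self_mem_ae_restrict measurableSet_Ioc] with s hs
        exact key s hs
    _ = M * K := by
        rw [hμB, Measure.restrict_apply_univ, Real.volume_Ioc, sub_zero,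
          ENNReal.toReal_ofReal hM, mul_comm]

lemma lemA_mono {α β M K : ℝ} {ψ : ℝ → ℝ} {h : ℝ → ℂ}
    (hab : α ≤ β) (hK : 0 ≤ K)
    (hmono : Monotone ψ) (hψ0 : ∀ u, 0 ≤ ψ u) (hψM : ∀ u, ψ u ≤ M)
    (hh : Continuous h)
    (hprim : ∀ c ∈ Set.Icc α β, ∀ d ∈ Set.Icc α β, ‖∫ t in c..d, h t‖ ≤ K) :
    ‖∫ u in α..β, (ψ u : ℂ) * h u‖ ≤ M * K := by
  have key := lemA_anti (α := -β) (β := -α) (M := M) (K := K)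
    (ψ := fun u => ψ (-u)) (h := fun u => h (-u))
    (by linarith) hK
    (fun u v huv => hmono (neg_le_neg huv))
    (fun u => hψ0 _) (fun u => hψM _)
    (hh.comp continuous_neg)
    (by
      intro c hc d hd
      rw [intervalIntegral.integral_comp_neg (fun t => h t)]
      exact hprim (-d) ⟨by linarith [hd.1, hd.2], by linarith [hd.1]⟩ (-c)
        ⟨by linarith [hc.2], by linarith [hc.1]⟩)
  rwa [intervalIntegral.integral_comp_neg (fun u => (ψ u : ℂ) * h u), neg_neg, neg_neg] at key

lemma ec_norm (t : ℝ) : ‖ec t‖ = 1 := by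
  rw [ec, Complex.norm_exp]
  norm_num [Complex.mul_re, Complex.mul_im]

lemma c2_ne : (2 * Real.pi * Complex.I) ≠ 0 := by
  simp [Real.pi_ne_zero, Complex.I_ne_zero]

lemma c2_norm : ‖(2 * Real.pi * Complex.I)‖ = 2 * Real.pi := by
  simp [map_mul, abs_of_pos Real.pi_pos]

lemma hasDerivAt_ec {F p : ℝ → ℝ} {t : ℝ} (h : HasDerivAt F (p t) t) :
    HasDerivAt (fun u => ec (F u)) (2 * Real.pi * Complex.I * p t * ec (F t)) t := by
  have := (h.ofReal_comp.const_mul (2 * Real.pi * Complex.I)).cexp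
  simp only [ec]
  convert this using 1
  ring

lemma ec_continuous : Continuous ec :=
  Complex.continuous_exp.comp (continuous_const.mul Complex.continuous_ofReal)

lemma lemB2 {a x lam : ℝ} {F p : ℝ → ℝ}
    (hax : a ≤ x) (hlam : 0 < lam)
    (hd : ∀ t ∈ Icc a x, HasDerivAt F (p t) t)
    (hpc : ContinuousOn p (Icc a x))
    (hmono : MonotoneOn p (Icc a x) ∨ AntitoneOn p (Icc a x))
    (hge : ∀ t ∈ Icc a x, lam ≤ p t) :
    ‖∫ t in a..x, ec (F t)‖ ≤ 1 / (Real.pi * lam) := by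
  set q : ℝ → ℝ := fun t => min x (max a t) with hq
  have qmem : ∀ t, q t ∈ Icc a x := fun t => ⟨le_min hax (le_max_left _ _), min_le_left _ _⟩
  have qmono : Monotone q := fun u v huv => min_le_min le_rfl (max_le_max le_rfl huv)
  have qfix : ∀ t ∈ Icc a x, q t = t := by
    intro t ht
    rw [hq]; dsimp only
    rw [max_eq_right ht.1, min_eq_right ht.2]
  have qcont : Continuous q := continuous_const.min (continuous_const.max continuous_id)
  have hFc : ContinuousOn F (Icc a x) := fun t ht => (hd t ht).continuousAt.continuousWithinAt
  set ψ : ℝ → ℝ := fun t => (p (q t))⁻¹ with hψ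
  set h : ℝ → ℂ := fun t => (p (q t) : ℂ) * ec (F (q t)) with hh
  have hppos : ∀ t, 0 < p (q t) := fun t => lt_of_lt_of_le hlam (hge _ (qmem t))
  have hψ0 : ∀ u, 0 ≤ ψ u := fun u => (inv_nonneg).mpr (hppos u).le
  have hψM : ∀ u, ψ u ≤ lam⁻¹ := fun u => inv_anti₀ hlam (hge _ (qmem u))
  have hhc : Continuous h := by
    apply Continuous.mul
    · exact Complex.continuous_ofReal.comp (hpc.comp_continuous qcont qmem)
    · exact ec_continuous.comp (hFc.comp_continuous qcont qmem)
  have hK : (0:ℝ) ≤ 1 / Real.pi := by positivity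
  have hprim : ∀ c ∈ Icc a x, ∀ d ∈ Icc a x, ‖∫ t in c..d, h t‖ ≤ 1 / Real.pi := by
    intro c hc d hd'
    have husub : uIcc c d ⊆ Icc a x := by
      rw [← uIcc_of_le hax]
      exact uIcc_subset_uIcc (by rw [uIcc_of_le hax]; exact hc) (by rw [uIcc_of_le hax]; exact hd')
    have heq : ∫ t in c..d, h t = ∫ t in c..d, (p t : ℂ) * ec (F t) := by
      apply intervalIntegral.integral_congr
      intro t ht
      rw [hh]; dsimp only; rw [qfix t (husub ht)]
    have hder : ∀ t ∈ uIcc c d,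
        HasDerivAt (fun u => ec (F u) / (2 * Real.pi * Complex.I)) ((p t : ℂ) * ec (F t)) t := by
      intro t ht
      have := (hasDerivAt_ec (hd t (husub ht))).div_const (2 * Real.pi * Complex.I)
      exact this.congr_deriv (by rw [eq_comm, eq_div_iff c2_ne]; ring)
    have hint : IntervalIntegrable (fun t => (p t : ℂ) * ec (F t)) volume c d := by
      apply ContinuousOn.intervalIntegrable
      apply ContinuousOn.mul
      · exact Complex.continuous_ofReal.comp_continuousOn (hpc.mono husub)
      · exact ec_continuous.comp_continuousOn (hFc.mono husub)
    rw [heq, intervalIntegral.integral_eq_sub_of_hasDerivAt hder hint]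
    have hn : ∀ u : ℝ, ‖ec (F u) / (2 * Real.pi * Complex.I)‖ = 1 / (2 * Real.pi) := by
      intro u
      rw [norm_div, ec_norm, c2_norm]
    calc ‖ec (F d) / (2 * Real.pi * Complex.I) - ec (F c) / (2 * Real.pi * Complex.I)‖
        ≤ ‖ec (F d) / (2 * Real.pi * Complex.I)‖ + ‖ec (F c) / (2 * Real.pi * Complex.I)‖ :=
          norm_sub_le _ _
      _ = 1 / Real.pi := by rw [hn, hn]; field_simp [Real.pi_ne_zero]; ring
  have heq2 : ∫ t in a..x, ec (F t) = ∫ u in a..x, (ψ u : ℂ) * h u := by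
    apply intervalIntegral.integral_congr
    intro t ht
    rw [uIcc_of_le hax] at ht
    rw [hψ, hh]; dsimp only
    rw [qfix t ht]
    rw [Complex.ofReal_inv]
    have : (p t : ℂ) ≠ 0 := by
      exact_mod_cast ne_of_gt (lt_of_lt_of_le hlam (hge t ht))
    field_simp
  rw [heq2]
  have hres : ‖∫ u in a..x, (ψ u : ℂ) * h u‖ ≤ lam⁻¹ * (1 / Real.pi) := by
    rcases hmono with hm | hm
    · apply lemA_anti hax hK ?_ hψ0 hψM hhc hprim
      intro u v huv
      exact inv_anti₀ (hppos u) (hm (qmem u) (qmem v) (qmono huv))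
    · apply lemA_mono hax hK ?_ hψ0 hψM hhc hprim
      intro u v huv
      exact inv_anti₀ (hppos v) (hm (qmem u) (qmem v) (qmono huv))
  calc ‖∫ u in a..x, (ψ u : ℂ) * h u‖ ≤ lam⁻¹ * (1 / Real.pi) := hres
    _ = 1 / (Real.pi * lam) := by field_simp [Real.pi_ne_zero]

lemma ext_ge {a b lam : ℝ} {p : ℝ → ℝ} (hab : a < b) (hc : ContinuousOn p (Icc a b))
    (hIoo : ∀ t ∈ Ioo a b, lam ≤ p t) : ∀ t ∈ Icc a b, lam ≤ p t := by
  intro t ht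
  have hcl : t ∈ closure (Ioo a b) := by rw [closure_Ioo hab.ne]; exact ht
  haveI := mem_closure_iff_nhdsWithin_neBot.mp hcl
  exact ge_of_tendsto ((hc t ht).mono_left (nhdsWithin_mono t Ioo_subset_Icc_self))
    (Filter.eventually_of_mem self_mem_nhdsWithin hIoo)

lemma sign_dichotomy {a b lam : ℝ} {p : ℝ → ℝ} (hab : a < b) (hlam : 0 < lam)
    (hc : ContinuousOn p (Icc a b)) (habs : ∀ t ∈ Ioo a b, lam ≤ |p t|) :
    (∀ t ∈ Icc a b, lam ≤ p t) ∨ (∀ t ∈ Icc a b, p t ≤ -lam) := by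
  have hIoo : (∀ t ∈ Ioo a b, lam ≤ p t) ∨ (∀ t ∈ Ioo a b, p t ≤ -lam) := by
    by_contra hcon
    push_neg at hcon
    obtain ⟨⟨t₁, ht₁, h1⟩, ⟨t₂, ht₂, h2⟩⟩ := hcon
    have h1' : p t₁ ≤ -lam := by
      rcases abs_cases (p t₁) with ⟨he, _⟩ | ⟨he, _⟩
      · exact absurd (he ▸ habs t₁ ht₁) (not_le.mpr h1)
      · linarith [habs t₁ ht₁]
    have h2' : lam ≤ p t₂ := by
      rcases abs_cases (p t₂) with ⟨he, _⟩ | ⟨he, _⟩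
      · linarith [habs t₂ ht₂]
      · linarith [habs t₂ ht₂]
    have hsub : uIcc t₁ t₂ ⊆ Ioo a b := by
      intro u hu
      rw [Set.uIcc, Set.mem_Icc] at hu
      exact ⟨lt_of_lt_of_le (lt_min ht₁.1 ht₂.1) hu.1,
        lt_of_le_of_lt hu.2 (max_lt ht₁.2 ht₂.2)⟩
    obtain ⟨t₀, ht₀, h0⟩ := intermediate_value_uIcc
      (hc.mono (hsub.trans Ioo_subset_Icc_self))
      (Set.mem_uIcc.mpr (Or.inl ⟨by linarith, by linarith⟩) : (0:ℝ) ∈ uIcc (p t₁) (p t₂))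
    have := habs t₀ (hsub ht₀)
    rw [h0] at this
    simp at this
    linarith
  rcases hIoo with hI | hI
  · exact Or.inl (ext_ge hab hc hI)
  · right
    have := ext_ge hab (hc.neg) (lam := lam) (fun t ht => by simpa using neg_le_neg (hI t ht))
    intro t ht; linarith [this t ht, show (-p) t = -p t from rfl]

lemma lemB {a b x lam : ℝ} {f f' : ℝ → ℝ} (hab : a < b) (hx : x ∈ Icc a b) (hlam : 0 < lam)
    (hf : ∀ t ∈ Icc a b, HasDerivAt f (f' t) t) (hf'c : ContinuousOn f' (Icc a b))
    (hm : MonotoneOn f' (Icc a b) ∨ AntitoneOn f' (Icc a b))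
    (habs : ∀ t ∈ Ioo a b, lam ≤ |f' t|) :
    ‖∫ t in a..x, ec (f t)‖ ≤ 1 / (Real.pi * lam) := by
  have hsub : Icc a x ⊆ Icc a b := Icc_subset_Icc le_rfl hx.2
  rcases sign_dichotomy hab hlam hf'c habs with hs | hs
  · exact lemB2 hx.1 hlam (fun t ht => hf t (hsub ht)) (hf'c.mono hsub)
      (hm.imp (fun h => h.mono hsub) (fun h => h.mono hsub))
      (fun t ht => hs t (hsub ht))
  · have hm' : MonotoneOn (fun t => -f' t) (Icc a x) ∨ AntitoneOn (fun t => -f' t) (Icc a x) := by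
      rcases hm with h | h
      · exact Or.inr (fun u hu v hv huv => neg_le_neg (h (hsub hu) (hsub hv) huv))
      · exact Or.inl (fun u hu v hv huv => neg_le_neg (h (hsub hu) (hsub hv) huv))
    have key := lemB2 (F := fun t => -f t) (p := fun t => -f' t) hx.1 hlam
      (fun t ht => (hf t (hsub ht)).neg) ((hf'c.mono hsub).neg)
      hm' (fun t ht => by have := hs t (hsub ht); linarith)
    have hconj : ∀ t : ℝ, ec (f t) = (starRingEnd ℂ) (ec (-f t)) := by
      intro t
      rw [ec, ec, ← Complex.exp_conj]
      congr 1
      simp only [Complex.ofReal_neg, map_mul, map_neg, Complex.conj_I, Complex.conj_ofReal,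
        map_ofNat]
      ring
    have heq : ∫ t in a..x, ec (f t) = (starRingEnd ℂ) (∫ t in a..x, ec (-f t)) := by
      rw [show (fun t => ec (f t)) = fun t => (starRingEnd ℂ) (ec (-f t)) from funext hconj]
      rw [intervalIntegral, intervalIntegral, integral_conj, integral_conj, map_sub]
    rw [heq, RCLike.norm_conj]
    exact key

/-- The first derivative test for oscillatory integrals with a weight:
if `|f'| ≥ λ` on `(a,b)`, `f'` is monotone, and `|g| ≤ G`, then
`|∫_a^b g(x) e(f(x)) dx| ≪ G/λ + (1/λ) ∫_a^b |g'(x)| dx` with an absolute constant. -/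
theorem first_derivative_test :
    ∃ C : ℝ, 0 < C ∧
      ∀ (a b lam G : ℝ) (f f' : ℝ → ℝ) (g g' : ℝ → ℂ),
        a < b → 0 < lam →
        (∀ x ∈ Set.Icc a b, HasDerivAt f (f' x) x) →
        ContinuousOn f' (Set.Icc a b) →
        (MonotoneOn f' (Set.Icc a b) ∨ AntitoneOn f' (Set.Icc a b)) →
        (∀ x ∈ Set.Ioo a b, lam ≤ |f' x|) →
        (∀ x ∈ Set.Icc a b, HasDerivAt g (g' x) x) →
        ContinuousOn g' (Set.Icc a b) →
        (∀ x ∈ Set.Icc a b, ‖g x‖ ≤ G) →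
        ‖∫ x in a..b, g x * ec (f x)‖
          ≤ C * (G / lam + lam⁻¹ * ∫ x in a..b, ‖g' x‖) := by
  refine ⟨1, one_pos, ?_⟩
  intro a b lam G f f' g g' hab hlam hf hf'c hm habs hg hg'c hG
  set q : ℝ → ℝ := fun t => min b (max a t) with hq
  have qmem : ∀ t, q t ∈ Icc a b := fun t => ⟨le_min hab.le (le_max_left _ _), min_le_left _ _⟩
  have qfix : ∀ t ∈ Icc a b, q t = t := by
    intro t ht
    rw [hq]; dsimp only
    rw [max_eq_right ht.1, min_eq_right ht.2]
  have qcont : Continuous q := continuous_const.min (continuous_const.max continuous_id)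
  have hfc : ContinuousOn f (Icc a b) := fun t ht => (hf t ht).continuousAt.continuousWithinAt
  have hgc : ContinuousOn g (Icc a b) := fun t ht => (hg t ht).continuousAt.continuousWithinAt
  have efc : Continuous (fun t => ec (f (q t))) :=
    ec_continuous.comp (hfc.comp_continuous qcont qmem)
  set I : ℝ → ℂ := fun u => ∫ t in a..u, ec (f (q t)) with hI
  have hIder : ∀ u : ℝ, HasDerivAt I (ec (f (q u))) u := fun u =>
    intervalIntegral.integral_hasDerivAt_right (efc.intervalIntegrable _ _)
      (efc.stronglyMeasurableAtFilter _ _) efc.continuousAt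
  have hIcont : Continuous I := continuous_iff_continuousAt.mpr fun u => (hIder u).continuousAt
  have hIa : I a = 0 := intervalIntegral.integral_same
  -- integration by parts
  have hint1 : IntervalIntegrable (fun x => g' x * I x) volume a b := by
    apply ContinuousOn.intervalIntegrable
    rw [uIcc_of_le hab.le]
    exact hg'c.mul hIcont.continuousOn
  have hint2 : IntervalIntegrable (fun x => g x * ec (f (q x))) volume a b := by
    apply ContinuousOn.intervalIntegrable
    rw [uIcc_of_le hab.le]
    exact hgc.mul efc.continuousOn
  have hibp : (∫ x in a..b, g' x * I x) + (∫ x in a..b, g x * ec (f (q x)))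
      = g b * I b := by
    rw [← intervalIntegral.integral_add hint1 hint2]
    have := intervalIntegral.integral_eq_sub_of_hasDerivAt
      (f := fun u => g u * I u) (f' := fun x => g' x * I x + g x * ec (f (q x)))
      (a := a) (b := b) ?_ (hint1.add hint2)
    · rw [this]
      show g b * I b - g a * I a = g b * I b
      rw [hIa, mul_zero, sub_zero]
    · intro x hx
      rw [uIcc_of_le hab.le] at hx
      exact (hg x hx).mul (hIder x)
  have hmain : ∫ x in a..b, g x * ec (f x) = g b * I b - ∫ x in a..b, g' x * I x := by
    rw [← hibp]
    have : ∫ x in a..b, g x * ec (f x) = ∫ x in a..b, g x * ec (f (q x)) := by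
      apply intervalIntegral.integral_congr
      intro t ht
      rw [uIcc_of_le hab.le] at ht
      dsimp only
      rw [qfix t ht]
    rw [this]; ring
  set S : ℝ := 1 / (Real.pi * lam) with hS
  have hIbound : ∀ x ∈ Icc a b, ‖I x‖ ≤ S := by
    intro x hx
    have : I x = ∫ t in a..x, ec (f t) := by
      apply intervalIntegral.integral_congr
      intro t ht
      rw [uIcc_of_le hx.1] at ht
      dsimp only
      rw [qfix t (Icc_subset_Icc le_rfl hx.2 ht)]
    rw [this]
    exact lemB hab hx hlam hf hf'c hm habs
  have hG0 : 0 ≤ G := le_trans (norm_nonneg _) (hG a ⟨le_rfl, hab.le⟩)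
  have hS0 : 0 ≤ S := by rw [hS]; positivity
  have hSlam : S ≤ lam⁻¹ := by
    rw [hS, div_eq_mul_inv, one_mul]
    apply inv_anti₀ hlam
    nlinarith [Real.pi_gt_three]
  have hnorm1 : ‖∫ x in a..b, g' x * I x‖ ≤ (∫ x in a..b, ‖g' x‖) * S := by
    calc ‖∫ x in a..b, g' x * I x‖ ≤ ∫ x in a..b, ‖g' x * I x‖ :=
          intervalIntegral.norm_integral_le_integral_norm hab.le
      _ ≤ ∫ x in a..b, ‖g' x‖ * S := by
          apply intervalIntegral.integral_mono_on hab.le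
          · apply ContinuousOn.intervalIntegrable
            rw [uIcc_of_le hab.le]
            exact (hg'c.mul hIcont.continuousOn).norm
          · apply ContinuousOn.intervalIntegrable
            rw [uIcc_of_le hab.le]
            exact (hg'c.norm.mul continuousOn_const)
          · intro x hx
            rw [norm_mul]
            exact mul_le_mul_of_nonneg_left (hIbound x hx) (norm_nonneg _)
      _ = (∫ x in a..b, ‖g' x‖) * S := by
          rw [← intervalIntegral.integral_mul_const]
  have hg'nonneg : 0 ≤ ∫ x in a..b, ‖g' x‖ :=
    intervalIntegral.integral_nonneg hab.le (fun x _ => norm_nonneg _)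
  rw [hmain, one_mul]
  calc ‖g b * I b - ∫ x in a..b, g' x * I x‖
      ≤ ‖g b * I b‖ + ‖∫ x in a..b, g' x * I x‖ := norm_sub_le _ _
    _ ≤ G * S + (∫ x in a..b, ‖g' x‖) * S := by
        apply add_le_add _ hnorm1
        rw [norm_mul]
        apply mul_le_mul _ (hIbound b ⟨hab.le, le_rfl⟩) (norm_nonneg _) hG0
        exact hG b ⟨hab.le, le_rfl⟩
    _ ≤ G / lam + lam⁻¹ * ∫ x in a..b, ‖g' x‖ := by
        apply add_le_add
        · rw [div_eq_mul_inv]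
          exact mul_le_mul_of_nonneg_left hSlam hG0
        · rw [mul_comm lam⁻¹ _]
          exact mul_le_mul_of_nonneg_left hSlam hg'nonneg
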